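/- Let G be finitely generated with word length L and Cayley graph X, and suppose G is (*)-relatively hyperbolic with respect to finitely generated subgroups H₁,…,H_m with constants σ, δ; set κ = σ + δ. Fix for each g a geodesic 𝔮_g from 1 to g. Then every g ∈ G with L(g) = r (for r ∈ {p, r₂}) admits at most C₁·r₁ + C₂ central decompositions g = g₁ η g₂ arising from triangles with sides 𝔮_g, 𝔮_h (L(h) = r₁), h𝔮_k, where C₁, C₂ are constants depending only on G, S, σ, δ, m and the H_i. -/

import Mathlib

/-- Word length with respect to a finite generating set `S`. -/
noncomputable def wlen {G : Type*} [Group G] (S : Finset G) (g : G) : ℕ :=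
  sInf {n : ℕ | ∃ l : List G, (∀ x ∈ l, x ∈ S) ∧ l.prod = g ∧ l.length = n}

/-- Word metric on the Cayley graph of `(G, S)`. -/
noncomputable def wdist {G : Type*} [Group G] (S : Finset G) (g h : G) : ℕ :=
  wlen S (g⁻¹ * h)

/-- `f` restricted to `{0, …, n}` is a (discrete) geodesic in the Cayley graph. -/
def IsGeod {G : Type*} [Group G] (S : Finset G) (f : ℕ → G) (n : ℕ) : Prop :=
  ∀ i j : ℕ, i ≤ j → j ≤ n → wdist S (f i) (f j) = j - i

/-- A geodesic triangle: three geodesic sides, cyclically sharing endpoints. -/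
def IsTriangle {G : Type*} [Group G] (S : Finset G) (f₁ : ℕ → G) (n₁ : ℕ)
    (f₂ : ℕ → G) (n₂ : ℕ) (f₃ : ℕ → G) (n₃ : ℕ) : Prop :=
  IsGeod S f₁ n₁ ∧ IsGeod S f₂ n₂ ∧ IsGeod S f₃ n₃ ∧
    f₁ n₁ = f₂ 0 ∧ f₂ n₂ = f₃ 0 ∧ f₃ n₃ = f₁ 0

/-- `f j` is in the closed `σ`-neighborhood of `A`. -/
def NearSet {G : Type*} [Group G] (S : Finset G) (σ : ℝ) (A : Set G) (p : G) : Prop :=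
  ∃ a ∈ A, (wdist S p a : ℝ) ≤ σ

/-- `j` is the entrance index of the side `f` (of length `n`) into the closed
`σ`-neighborhood of `A`. -/
def IsEntrance {G : Type*} [Group G] (S : Finset G) (f : ℕ → G) (n : ℕ) (A : Set G)
    (σ : ℝ) (j : ℕ) : Prop :=
  j ≤ n ∧ NearSet S σ A (f j) ∧ ∀ j' < j, ¬ NearSet S σ A (f j')

/-- `j` is the exit index of the side `f` (of length `n`) from the closed
`σ`-neighborhood of `A`. -/
def IsExit {G : Type*} [Group G] (S : Finset G) (f : ℕ → G) (n : ℕ) (A : Set G)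
    (σ : ℝ) (j : ℕ) : Prop :=
  j ≤ n ∧ NearSet S σ A (f j) ∧ ∀ j' : ℕ, j < j' → j' ≤ n → ¬ NearSet S σ A (f j')

/-- The condition of property (*) for a geodesic triangle with (cyclically oriented)
sides `f₁, f₂, f₃` and the set `A` (a coset `gHᵢ`): the closed `σ`-neighborhood of `A`
meets all three sides, and at each vertex of the triangle the two nearby
entrance/exit points are at distance `< δ` from each other. -/
def StarCond {G : Type*} [Group G] (S : Finset G) (σ δ : ℝ) (f₁ : ℕ → G) (n₁ : ℕ)
    (f₂ : ℕ → G) (n₂ : ℕ) (f₃ : ℕ → G) (n₃ : ℕ) (A : Set G) : Prop :=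
  ∃ a₁ b₂ b₁ c₂ c₁ a₂ : ℕ,
    IsEntrance S f₁ n₁ A σ a₁ ∧ IsExit S f₁ n₁ A σ b₂ ∧
    IsEntrance S f₂ n₂ A σ b₁ ∧ IsExit S f₂ n₂ A σ c₂ ∧
    IsEntrance S f₃ n₃ A σ c₁ ∧ IsExit S f₃ n₃ A σ a₂ ∧
    (wdist S (f₁ a₁) (f₃ a₂) : ℝ) < δ ∧
    (wdist S (f₂ b₁) (f₁ b₂) : ℝ) < δ ∧
    (wdist S (f₃ c₁) (f₂ c₂) : ℝ) < δ

/-- `(g₁, η, g₂)` is a central decomposition of `g` arising from a geodesic triangle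
with vertices `1, h, g = hk` (where `wlen S h = r₁`), sides `𝔮_h`, `h·𝔮_k` and the
reverse of `𝔮_g`, and a coset `γ·Hᵢ` furnished by property (*): `g = g₁ η g₂` with
`g₁ ∈ γHᵢ`, `η ∈ Hᵢ`, `g₁` within `κ = σ + δ` of the entrance point of `𝔮_g` into the
closed `σ`-neighborhood of `γHᵢ` and `g₁η` within `κ` of its exit point. -/
def CentralDec {G : Type*} [Group G] (S : Finset G) {m : ℕ} (H : Fin m → Subgroup G)
    (σ δ : ℝ) (q : G → ℕ → G) (r₁ : ℕ) (g : G) (t : G × G × G) : Prop :=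
  ∃ (i : Fin m) (γ h k : G),
    h * k = g ∧ wlen S h = r₁ ∧
    g = t.1 * t.2.1 * t.2.2 ∧
    γ⁻¹ * t.1 ∈ H i ∧ t.2.1 ∈ H i ∧
    StarCond S σ δ (q h) (wlen S h) (fun j => h * q k j) (wlen S k)
      (fun j => q g (wlen S g - j)) (wlen S g) {u : G | γ⁻¹ * u ∈ H i} ∧
    ∃ e x : ℕ,
      IsEntrance S (q g) (wlen S g) {u : G | γ⁻¹ * u ∈ H i} σ e ∧
      IsExit S (q g) (wlen S g) {u : G | γ⁻¹ * u ∈ H i} σ x ∧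
      (wdist S t.1 (q g e) : ℝ) ≤ σ + δ ∧
      (wdist S (t.1 * t.2.1) (q g x) : ℝ) ≤ σ + δ

section helpers
variable {G : Type*} [Group G] (S : Finset G)

lemma wlen_spec (hgen : ∀ g : G, ∃ l : List G, (∀ x ∈ l, x ∈ S) ∧ l.prod = g) (g : G) :
    ∃ l : List G, (∀ x ∈ l, x ∈ S) ∧ l.prod = g ∧ l.length = wlen S g := by
  obtain ⟨l, hl, hp⟩ := hgen g
  have hne : {n : ℕ | ∃ l : List G, (∀ x ∈ l, x ∈ S) ∧ l.prod = g ∧ l.length = n}.Nonempty :=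
    ⟨l.length, l, hl, hp, rfl⟩
  exact Nat.sInf_mem hne

lemma wlen_le {g : G} {l : List G} (hl : ∀ x ∈ l, x ∈ S) (hp : l.prod = g) :
    wlen S g ≤ l.length :=
  Nat.sInf_le ⟨l, hl, hp, rfl⟩

lemma wlen_mul_le (hgen : ∀ g : G, ∃ l : List G, (∀ x ∈ l, x ∈ S) ∧ l.prod = g) (a b : G) :
    wlen S (a * b) ≤ wlen S a + wlen S b := by
  obtain ⟨la, hla, hpa, hna⟩ := wlen_spec S hgen a
  obtain ⟨lb, hlb, hpb, hnb⟩ := wlen_spec S hgen b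
  have := wlen_le S (l := la ++ lb) (g := a * b)
    (by intro x hx; rcases List.mem_append.1 hx with h | h; exacts [hla x h, hlb x h])
    (by rw [List.prod_append, hpa, hpb])
  simpa [hna, hnb] using this

lemma wlen_inv_le (hsym : ∀ s ∈ S, s⁻¹ ∈ S)
    (hgen : ∀ g : G, ∃ l : List G, (∀ x ∈ l, x ∈ S) ∧ l.prod = g) (g : G) :
    wlen S g⁻¹ ≤ wlen S g := by
  obtain ⟨l, hl, hp, hn⟩ := wlen_spec S hgen g
  have := wlen_le S (l := (l.map fun x => x⁻¹).reverse) (g := g⁻¹)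
    (by
      intro x hx
      simp only [List.mem_reverse, List.mem_map] at hx
      obtain ⟨y, hy, rfl⟩ := hx
      exact hsym y (hl y hy))
    (by rw [← List.prod_inv_reverse, hp])
  simpa [hn] using this

lemma wdist_comm (hsym : ∀ s ∈ S, s⁻¹ ∈ S)
    (hgen : ∀ g : G, ∃ l : List G, (∀ x ∈ l, x ∈ S) ∧ l.prod = g) (a b : G) :
    wdist S a b = wdist S b a := by
  have h1 := wlen_inv_le S hsym hgen (a⁻¹ * b)
  have h2 := wlen_inv_le S hsym hgen (b⁻¹ * a)
  simp only [mul_inv_rev, inv_inv] at h1 h2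
  exact le_antisymm h2 h1

lemma wdist_triangle (hgen : ∀ g : G, ∃ l : List G, (∀ x ∈ l, x ∈ S) ∧ l.prod = g)
    (a b c : G) : wdist S a c ≤ wdist S a b + wdist S b c := by
  have := wlen_mul_le S hgen (a⁻¹ * b) (b⁻¹ * c)
  simpa [wdist, mul_assoc] using this

lemma wdist_one_left (u : G) : wdist S 1 u = wlen S u := by simp [wdist]

lemma ball_finite (hgen : ∀ g : G, ∃ l : List G, (∀ x ∈ l, x ∈ S) ∧ l.prod = g)
    (n : ℕ) : {u : G | wlen S u ≤ n}.Finite := by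
  classical
  have hfin : {l : List ↥S | l.length ≤ n}.Finite := List.finite_length_le ↥S n
  apply (hfin.image (fun l : List ↥S => (l.map Subtype.val).prod)).subset
  intro u hu
  obtain ⟨l, hl, hp, hn⟩ := wlen_spec S hgen u
  refine ⟨l.attach.map (fun x => (⟨x.1, hl x.1 x.2⟩ : ↥S)), ?_, ?_⟩
  · simpa using hn ▸ hu
  · simp only [List.map_map]
    have h2 : (l.attach.map fun x => ((⟨x.1, hl x.1 x.2⟩ : ↥S) : G)) = l := by simp
    simpa [Function.comp] using h2 ▸ hp
end helpers

section uniq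
variable {G : Type*} [Group G] (S : Finset G)

lemma entrance_unique {f : ℕ → G} {n : ℕ} {A : Set G} {σ : ℝ} {j j' : ℕ}
    (h : IsEntrance S f n A σ j) (h' : IsEntrance S f n A σ j') : j = j' := by
  by_contra hne
  rcases Nat.lt_or_ge j j' with hlt | hge
  · exact h'.2.2 j hlt h.2.1
  · exact h.2.2 j' (lt_of_le_of_ne hge (Ne.symm hne)) h'.2.1

lemma exit_unique {f : ℕ → G} {n : ℕ} {A : Set G} {σ : ℝ} {j j' : ℕ}
    (h : IsExit S f n A σ j) (h' : IsExit S f n A σ j') : j = j' := by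
  by_contra hne
  rcases Nat.lt_or_ge j j' with hlt | hge
  · exact h.2.2 j' hlt h'.1 h'.2.1
  · exact h'.2.2 j (lt_of_le_of_ne hge (Ne.symm hne)) h.1 h.2.1

open Classical in
noncomputable def exIdx (f : ℕ → G) (n : ℕ) (A : Set G) (σ : ℝ) : ℕ :=
  if h : ∃ x, IsExit S f n A σ x then h.choose else 0

lemma exIdx_eq {f : ℕ → G} {n : ℕ} {A : Set G} {σ : ℝ} {x : ℕ}
    (hx : IsExit S f n A σ x) : exIdx S f n A σ = x := by
  rw [exIdx, dif_pos ⟨x, hx⟩]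
  exact exit_unique S (⟨x, hx⟩ : ∃ x, IsExit S f n A σ x).choose_spec hx

end uniq

/-- in a group `G` which is (*)-relatively hyperbolic with respect to
finitely generated subgroups `H₁, …, H_m` with constants `σ, δ`, with a fixed choice
`𝔮_g` of geodesic from `1` to each `g`, every `g` admits at most `C₁·r₁ + C₂` central
decompositions arising from triangles whose second vertex `h` has length `r₁`. -/
theorem stmt12 {G : Type*} [Group G] (S : Finset G)
    (hsym : ∀ s ∈ S, s⁻¹ ∈ S)
    (hgen : ∀ g : G, ∃ l : List G, (∀ x ∈ l, x ∈ S) ∧ l.prod = g)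
    {m : ℕ} (H : Fin m → Subgroup G) (hFG : ∀ i, (H i).FG)
    (σ δ : ℝ) (hσ : 0 ≤ σ) (hδ : 0 ≤ δ)
    (hstar : ∀ (f₁ : ℕ → G) (n₁ : ℕ) (f₂ : ℕ → G) (n₂ : ℕ) (f₃ : ℕ → G) (n₃ : ℕ),
      IsTriangle S f₁ n₁ f₂ n₂ f₃ n₃ →
        ∃ (i : Fin m) (γ : G), StarCond S σ δ f₁ n₁ f₂ n₂ f₃ n₃ {u : G | γ⁻¹ * u ∈ H i})
    (q : G → ℕ → G)
    (hq : ∀ g : G, IsGeod S (q g) (wlen S g) ∧ q g 0 = 1 ∧ q g (wlen S g) = g) :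
    ∃ C₁ C₂ : ℝ, 0 ≤ C₁ ∧ 0 ≤ C₂ ∧ ∀ (r₁ : ℕ) (g : G),
      {t : G × G × G | CentralDec S H σ δ q r₁ g t}.Finite ∧
      (Nat.card {t : G × G × G | CentralDec S H σ δ q r₁ g t} : ℝ) ≤ C₁ * r₁ + C₂ := by
  classical
  set K := Nat.floor (σ + δ) with hK
  have hBfin : {u : G | wlen S u ≤ K}.Finite := ball_finite S hgen K
  haveI : Finite ↥{u : G | wlen S u ≤ K} := hBfin.to_subtype
  set Bc : ℕ := Nat.card ↥{u : G | wlen S u ≤ K} with hBc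
  refine ⟨(Bc : ℝ) * (m * Bc), (δ + 1) * ((Bc : ℝ) * (m * Bc)), by positivity, by positivity, ?_⟩
  intro r₁ g
  set E := Nat.floor ((r₁ : ℝ) + δ) with hE
  set n := wlen S g with hn
  set ψ : Fin (E + 1) × ↥{u : G | wlen S u ≤ K} × Fin m × ↥{u : G | wlen S u ≤ K} → G × G × G :=
    fun p =>
      ((q g p.1.1 * p.2.1),
       (q g p.1.1 * p.2.1)⁻¹ *
         (q g (exIdx S (q g) n {w | (q g p.1.1 * (p.2.1 : G))⁻¹ * w ∈ H p.2.2.1} σ) * p.2.2.2),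
       (q g (exIdx S (q g) n {w | (q g p.1.1 * (p.2.1 : G))⁻¹ * w ∈ H p.2.2.1} σ) * p.2.2.2)⁻¹ * g)
    with hψ
  have hsub : {t : G × G × G | CentralDec S H σ δ q r₁ g t} ⊆ Set.range ψ := by
    rintro ⟨u0, η0, w0⟩ ht
    obtain ⟨i, γ, h, k, hhk, hlh, hdec, hγu, hη, hstarc, e, x, hent, hexit, hde, hdx⟩ := ht
    -- the coset set equals the one based at u0
    have hAA : {u : G | γ⁻¹ * u ∈ H i} = {w : G | u0⁻¹ * w ∈ H i} := by
      ext w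
      simp only [Set.mem_setOf_eq]
      constructor
      · intro hw
        have := mul_mem (inv_mem hγu) hw
        convert this using 1; group
      · intro hw
        have := mul_mem hγu hw
        convert this using 1; group
    -- bound on the entrance index e
    obtain ⟨a₁, b₂, b₁, c₂, c₁, a₂, hE1, _, _, _, _, hX3, hd1, _, _⟩ := hstarc
    have ha₂n : a₂ ≤ n := hX3.1
    have hEnt' : IsEntrance S (q g) n {u : G | γ⁻¹ * u ∈ H i} σ (n - a₂) := by
      refine ⟨Nat.sub_le _ _, hX3.2.1, ?_⟩
      intro j hj
      have hj1 : j < n := lt_of_lt_of_le hj (Nat.sub_le _ _)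
      have h1 : a₂ < n - j := by omega
      have := hX3.2.2 (n - j) h1 (Nat.sub_le _ _)
      simpa [← hn, show n - (n - j) = j by omega] using this
    have he_eq : e = n - a₂ := entrance_unique S hent hEnt'
    have he_len : (e : ℝ) ≤ (r₁ : ℝ) + δ := by
      have hgeo := (hq g).1 0 e (Nat.zero_le _) hent.1
      have h10 : q g 0 = 1 := (hq g).2.1
      have htri := wdist_triangle S hgen (1 : G) (q h a₁) (q g e)
      have ha₁ : wdist S (1 : G) (q h a₁) = a₁ := by
        have := (hq h).1 0 a₁ (Nat.zero_le _) hE1.1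
        simpa [(hq h).2.1] using this
      have ha₁r : a₁ ≤ r₁ := hlh ▸ hE1.1
      have hd1' : (wdist S (q h a₁) (q g e) : ℝ) < δ := by
        rw [he_eq]; exact hd1
      have hee : wdist S (1 : G) (q g e) = e := by
        rw [← h10]; simpa using hgeo
      have htri' : (wdist S (1 : G) (q g e) : ℝ) ≤
          (wdist S (1 : G) (q h a₁) : ℝ) + wdist S (q h a₁) (q g e) := by
        exact_mod_cast htri
      rw [hee, ha₁] at htri'
      have : (e : ℝ) ≤ (a₁ : ℝ) + wdist S (q h a₁) (q g e) := htri'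
      have : (e : ℝ) ≤ (a₁ : ℝ) + δ := le_trans this (by linarith)
      have : (e : ℝ) ≤ (r₁ : ℝ) + δ := le_trans this (by
        have : (a₁ : ℝ) ≤ r₁ := by exact_mod_cast ha₁r
        linarith)
      exact this
    have heE : e < E + 1 := Nat.lt_succ_of_le (Nat.le_floor he_len)
    -- ball memberships
    have hbmem : (q g e)⁻¹ * u0 ∈ {u : G | wlen S u ≤ K} := by
      have : wlen S ((q g e)⁻¹ * u0) = wdist S u0 (q g e) :=
        (wdist_comm S hsym hgen (q g e) u0).symm ▸ rfl
      simp only [Set.mem_setOf_eq]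
      rw [show wlen S ((q g e)⁻¹ * u0) = wdist S (q g e) u0 from rfl,
        wdist_comm S hsym hgen]
      exact Nat.le_floor hde
    have hbmem' : (q g x)⁻¹ * (u0 * η0) ∈ {u : G | wlen S u ≤ K} := by
      simp only [Set.mem_setOf_eq]
      rw [show wlen S ((q g x)⁻¹ * (u0 * η0)) = wdist S (q g x) (u0 * η0) from rfl,
        wdist_comm S hsym hgen]
      exact Nat.le_floor hdx
    refine ⟨⟨⟨e, heE⟩, ⟨(q g e)⁻¹ * u0, hbmem⟩, i, ⟨(q g x)⁻¹ * (u0 * η0), hbmem'⟩⟩, ?_⟩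
    simp only [hψ]
    have hu : q g e * ((q g e)⁻¹ * u0) = u0 := by group
    rw [hu]
    have hxe : exIdx S (q g) n {w | u0⁻¹ * w ∈ H i} σ = x := by
      rw [← hAA]; exact exIdx_eq S hexit
    rw [hxe]
    have hv : q g x * ((q g x)⁻¹ * (u0 * η0)) = u0 * η0 := by group
    rw [hv]
    refine Prod.ext rfl (Prod.ext ?_ ?_) <;> simp only
    · group
    · rw [hdec]; group
  have hfin : {t : G × G × G | CentralDec S H σ δ q r₁ g t}.Finite :=
    (Set.finite_range ψ).subset hsub
  refine ⟨hfin, ?_⟩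
  have hc1 : Nat.card {t : G × G × G | CentralDec S H σ δ q r₁ g t} ≤
      Nat.card (Set.range ψ) := Nat.card_mono (Set.finite_range ψ) hsub
  have hc2 : Nat.card (Set.range ψ) ≤
      Nat.card (Fin (E + 1) × ↥{u : G | wlen S u ≤ K} × Fin m × ↥{u : G | wlen S u ≤ K}) :=
    Nat.card_le_card_of_surjective (Set.rangeFactorization ψ) Set.rangeFactorization_surjective
  have hc3 : Nat.card (Fin (E + 1) × ↥{u : G | wlen S u ≤ K} × Fin m × ↥{u : G | wlen S u ≤ K})
      = (E + 1) * (Bc * (m * Bc)) := by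
    have hf1 : Nat.card (Fin (E + 1)) = E + 1 := by
      simp [Nat.card_eq_fintype_card]
    have hf2 : Nat.card (Fin m) = m := by simp [Nat.card_eq_fintype_card]
    simp only [Nat.card_prod, hf1, hf2, hBc]
  have hEr : (E : ℝ) ≤ (r₁ : ℝ) + δ := Nat.floor_le (by positivity)
  have hcard : (Nat.card {t : G × G × G | CentralDec S H σ δ q r₁ g t} : ℝ) ≤
      ((E + 1) * (Bc * (m * Bc)) : ℕ) := by
    exact_mod_cast le_trans hc1 (hc3 ▸ hc2)
  refine le_trans hcard ?_
  push_cast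
  have hC : (0:ℝ) ≤ (Bc : ℝ) * (m * Bc) := by positivity
  nlinarith [mul_le_mul_of_nonneg_right (show (E:ℝ) + 1 ≤ (r₁ : ℝ) + δ + 1 by linarith) hC]
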